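/- Let q, m, h be integers with q, h ≥ 2 and m ≥ 1, and let f: ℤ_q^m → ℤ_h be a map with f(0) = 0. Then f is a generalized bent function if and only if the coboundary matrix M_{∂f} = [ζ_h^{f(a+b)−f(a)−f(b)}]_{a,b ∈ ℤ_q^m} is a Butson Hadamard matrix in BH(q^m, h). -/

import Mathlib

open scoped BigOperators

noncomputable section

/-- `zeta k` is the complex `k`-th root of unity `exp(2π√-1/k)`. -/
def zeta (k : ℕ) : ℂ := Complex.exp (2 * Real.pi * Complex.I / k)

lemma zeta_ne_zero (k : ℕ) : zeta k ≠ 0 := Complex.exp_ne_zero _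
lemma zeta_prim (k : ℕ) (hk : k ≠ 0) : IsPrimitiveRoot (zeta k) k :=
  Complex.isPrimitiveRoot_exp k hk
lemma zeta_pow_self (k : ℕ) (hk : k ≠ 0) : zeta k ^ k = 1 :=
  (zeta_prim k hk).pow_eq_one
lemma pow_mod_eq {z : ℂ} {k : ℕ} (h1 : z ^ k = 1) (n : ℕ) : z ^ (n % k) = z ^ n := by
  conv_rhs => rw [← Nat.mod_add_div n k]
  rw [pow_add, pow_mul, h1, one_pow, mul_one]

def chE (k : ℕ) (a : ZMod k) : ℂ := zeta k ^ a.val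

lemma chE_ne_zero (k : ℕ) (a : ZMod k) : chE k a ≠ 0 := pow_ne_zero _ (zeta_ne_zero k)

lemma chE_zero (k : ℕ) [NeZero k] : chE k 0 = 1 := by
  simp [chE, ZMod.val_zero]

lemma chE_add (k : ℕ) [NeZero k] (a b : ZMod k) : chE k (a + b) = chE k a * chE k b := by
  unfold chE
  rw [← pow_add, ZMod.val_add, pow_mod_eq (zeta_pow_self k (NeZero.ne k))]

lemma chE_neg (k : ℕ) [NeZero k] (a : ZMod k) : chE k (-a) = (chE k a)⁻¹ := by
  have h : chE k a * chE k (-a) = 1 := by rw [← chE_add, add_neg_cancel, chE_zero]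
  exact (inv_eq_of_mul_eq_one_right h).symm

lemma chE_sub (k : ℕ) [NeZero k] (a b : ZMod k) : chE k (a - b) = chE k a * (chE k b)⁻¹ := by
  rw [sub_eq_add_neg, chE_add, chE_neg]

lemma chE_mul (k : ℕ) [NeZero k] (c a : ZMod k) : chE k (c * a) = chE k a ^ c.val := by
  unfold chE
  rw [ZMod.val_mul, pow_mod_eq (zeta_pow_self k (NeZero.ne k)), ← pow_mul, mul_comm c.val]

lemma sum_zmod_pow (q : ℕ) [NeZero q] (z : ℂ) :
    ∑ c : ZMod q, z ^ c.val = ∑ i ∈ Finset.range q, z ^ i := by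
  rw [← Fin.sum_univ_eq_sum_range]
  apply Fintype.sum_bijective (fun c : ZMod q => (⟨c.val, ZMod.val_lt c⟩ : Fin q))
  · constructor
    · intro a b hab
      exact ZMod.val_injective q (by simpa using congrArg Fin.val hab)
    · intro i
      refine ⟨(i : ZMod q), ?_⟩
      ext
      simp [ZMod.val_cast_of_lt i.isLt]
  · intro c; rfl

lemma single_sum (q : ℕ) [NeZero q] (a : ZMod q) :
    ∑ c : ZMod q, chE q (c * a) = if a = 0 then (q : ℂ) else 0 := by
  simp only [chE_mul]
  rw [sum_zmod_pow]
  by_cases ha : a = 0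
  · simp [ha, chE_zero]
  · rw [if_neg ha]
    have hne : chE q a ≠ 1 := by
      have := (zeta_prim q (NeZero.ne q)).pow_ne_one_of_pos_of_lt
        (ZMod.val_pos.mpr ha).ne' (ZMod.val_lt a)
      exact this
    rw [geom_sum_eq hne]
    have : chE q a ^ q = 1 := by
      unfold chE
      rw [← pow_mul, mul_comm, pow_mul, zeta_pow_self q (NeZero.ne q), one_pow]
    rw [this, sub_self, zero_div]

/-- Standard dot product of tuples, computed with representatives in `{0,…,q-1}`. -/
def dotv {m q : ℕ} (u v : Fin m → ZMod q) : ℕ := ∑ i, (u i).val * (v i).val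

lemma ortho (q m : ℕ) [NeZero q] (d : Fin m → ZMod q) :
    ∑ w : Fin m → ZMod q, ∏ i, chE q (w i * d i) =
      if d = 0 then ((q : ℂ)) ^ m else 0 := by
  rw [← Fintype.prod_sum (fun (i : Fin m) (c : ZMod q) => chE q (c * d i))]
  by_cases hd : d = 0
  · subst hd
    simp [single_sum, Finset.prod_const, chE_zero]
  · rw [if_neg hd]
    obtain ⟨i, hi⟩ : ∃ i, d i ≠ 0 := by
      by_contra hc
      push_neg at hc
      exact hd (funext hc)
    apply Finset.prod_eq_zero (Finset.mem_univ i)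
    rw [single_sum, if_neg hi]

lemma zeta_dotv (q m : ℕ) [NeZero q] (w x : Fin m → ZMod q) :
    zeta q ^ dotv w x = ∏ i, chE q (w i * x i) := by
  unfold dotv
  rw [← Finset.prod_pow_eq_pow_sum]
  apply Finset.prod_congr rfl
  intro i _
  rw [chE_mul]
  unfold chE
  rw [← pow_mul, mul_comm (x i).val]

/-- The "Walsh" sum `Σ_{x ∈ ℤ_q^m} ζ_h^{f(x)} ζ_q^{-w·x}`. -/
def WS (q h : ℕ) {m : ℕ} [NeZero q] (f : (Fin m → ZMod q) → ZMod h)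
    (w : Fin m → ZMod q) : ℂ :=
  ∑ x : Fin m → ZMod q, zeta h ^ (f x).val * zeta q ^ (-(dotv w x : ℤ))

lemma norm_zeta (k : ℕ) : ‖zeta k‖ = 1 := by
  have : zeta k = Complex.exp ((2 * Real.pi / k : ℝ) * Complex.I) := by
    unfold zeta; push_cast; ring_nf
  rw [this, Complex.norm_exp_ofReal_mul_I]

lemma conj_zeta (k : ℕ) : (starRingEnd ℂ) (zeta k) = (zeta k)⁻¹ :=
  (Complex.inv_eq_conj (norm_zeta k)).symm

lemma conj_chE (k : ℕ) (a : ZMod k) : (starRingEnd ℂ) (chE k a) = (chE k a)⁻¹ := by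
  unfold chE
  rw [map_pow, conj_zeta, inv_pow]


/-- `f : ℤ_q^m → ℤ_h` is a generalized bent function (GBF). -/
def IsGBF (q h : ℕ) {m : ℕ} [NeZero q] (f : (Fin m → ZMod q) → ZMod h) : Prop :=
  ∀ w : Fin m → ZMod q, (‖WS q h f w‖) ^ 2 = (q : ℝ) ^ m

def Acorr (q h : ℕ) {m : ℕ} [NeZero q] (f : (Fin m → ZMod q) → ZMod h)
    (d : Fin m → ZMod q) : ℂ :=
  ∑ x : Fin m → ZMod q, chE h (f (x + d) - f x)

lemma card_fun (q m : ℕ) [NeZero q] : Fintype.card (Fin m → ZMod q) = q ^ m := by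
  simp [ZMod.card]

lemma Acorr_zero (q h : ℕ) {m : ℕ} [NeZero q] [NeZero h] (f : (Fin m → ZMod q) → ZMod h) :
    Acorr q h f 0 = (q : ℂ) ^ m := by
  unfold Acorr
  simp only [add_zero, sub_self, chE_zero, Finset.sum_const, Finset.card_univ]
  rw [card_fun, nsmul_eq_mul, mul_one]
  push_cast
  ring

lemma WS_expand (q h : ℕ) {m : ℕ} [NeZero q] [NeZero h]
    (f : (Fin m → ZMod q) → ZMod h) (w : Fin m → ZMod q) :
    WS q h f w * (starRingEnd ℂ) (WS q h f w)
      = ∑ d : Fin m → ZMod q, Acorr q h f d * (∏ i, chE q (w i * d i))⁻¹ := by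
  have hWS : WS q h f w = ∑ x : Fin m → ZMod q, chE h (f x) * (zeta q ^ dotv w x)⁻¹ := by
    unfold WS chE
    refine Finset.sum_congr rfl fun x _ => ?_
    rw [zpow_neg, zpow_natCast]
  have hconj : (starRingEnd ℂ) (WS q h f w)
      = ∑ y : Fin m → ZMod q, (chE h (f y))⁻¹ * zeta q ^ dotv w y := by
    rw [hWS, map_sum]
    refine Finset.sum_congr rfl fun y _ => ?_
    rw [map_mul, conj_chE, map_inv₀, map_pow, conj_zeta, inv_pow, inv_inv]
  rw [hconj, hWS, Finset.sum_mul_sum, Finset.sum_comm]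
  have key : ∀ y : Fin m → ZMod q,
      (∑ x : Fin m → ZMod q, (chE h (f x) * (zeta q ^ dotv w x)⁻¹)
        * ((chE h (f y))⁻¹ * zeta q ^ dotv w y))
      = ∑ d : Fin m → ZMod q, chE h (f (y + d) - f y) * (∏ i, chE q (w i * d i))⁻¹ := by
    intro y
    rw [← Equiv.sum_comp (Equiv.addLeft y) (fun x => (chE h (f x) * (zeta q ^ dotv w x)⁻¹)
        * ((chE h (f y))⁻¹ * zeta q ^ dotv w y))]
    refine Finset.sum_congr rfl fun d _ => ?_
    simp only [Equiv.coe_addLeft]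
    have hsplit : zeta q ^ dotv w (y + d)
        = zeta q ^ dotv w y * ∏ i, chE q (w i * d i) := by
      rw [zeta_dotv, zeta_dotv, ← Finset.prod_mul_distrib]
      refine Finset.prod_congr rfl fun i _ => ?_
      rw [← chE_add]
      congr 1
      show w i * (y i + d i) = w i * y i + w i * d i
      ring
    rw [hsplit, chE_sub]
    have h1 := chE_ne_zero h (f y)
    have h2 : (zeta q ^ dotv w y) ≠ 0 := pow_ne_zero _ (zeta_ne_zero q)
    have h3 : (∏ i, chE q (w i * d i)) ≠ 0 :=
      Finset.prod_ne_zero_iff.mpr fun i _ => chE_ne_zero q _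
    field_simp
  calc (∑ y : Fin m → ZMod q, ∑ x : Fin m → ZMod q,
        (chE h (f x) * (zeta q ^ dotv w x)⁻¹) * ((chE h (f y))⁻¹ * zeta q ^ dotv w y))
      = ∑ y : Fin m → ZMod q, ∑ d : Fin m → ZMod q,
          chE h (f (y + d) - f y) * (∏ i, chE q (w i * d i))⁻¹ := by
        exact Finset.sum_congr rfl fun y _ => key y
    _ = ∑ d : Fin m → ZMod q, ∑ y : Fin m → ZMod q,
          chE h (f (y + d) - f y) * (∏ i, chE q (w i * d i))⁻¹ := Finset.sum_comm
    _ = ∑ d : Fin m → ZMod q, Acorr q h f d * (∏ i, chE q (w i * d i))⁻¹ := by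
        refine Finset.sum_congr rfl fun d _ => ?_
        rw [Acorr, Finset.sum_mul]

lemma gbf_iff (q h : ℕ) {m : ℕ} [NeZero q] [NeZero h]
    (f : (Fin m → ZMod q) → ZMod h) :
    IsGBF q h f ↔ ∀ d : Fin m → ZMod q, d ≠ 0 → Acorr q h f d = 0 := by
  have habs : ∀ z : ℂ, ‖z‖ ^ 2 = (q : ℝ) ^ m ↔ z * (starRingEnd ℂ) z = (q : ℂ) ^ m := by
    intro z
    rw [Complex.mul_conj, ← Complex.sq_norm]
    constructor
    · intro hz
      rw [hz]; push_cast; ring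
    · intro hz
      have : ((‖z‖ ^ 2 : ℝ) : ℂ) = (((q : ℝ) ^ m : ℝ) : ℂ) := by
        rw [hz]; push_cast; ring
      exact_mod_cast this
  have hq0 : ((q : ℂ)) ^ m ≠ 0 := pow_ne_zero _ (by exact_mod_cast (NeZero.ne q))
  constructor
  · intro H d' hd'
    have H' : ∀ w : Fin m → ZMod q, ∑ d : Fin m → ZMod q, Acorr q h f d * (∏ i, chE q (w i * d i))⁻¹
        = (q : ℂ) ^ m := fun w => by rw [← WS_expand]; exact (habs _).mp (H w)
    have calc1 : ∑ w : Fin m → ZMod q, (∏ i, chE q (w i * d' i))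
          * (∑ d : Fin m → ZMod q, Acorr q h f d * (∏ i, chE q (w i * d i))⁻¹)
        = Acorr q h f d' * (q : ℂ) ^ m := by
      have step : ∀ w : Fin m → ZMod q, (∏ i, chE q (w i * d' i))
            * (∑ d : Fin m → ZMod q, Acorr q h f d * (∏ i, chE q (w i * d i))⁻¹)
          = ∑ d : Fin m → ZMod q, Acorr q h f d * (∏ i, chE q (w i * (d' i - d i))) := by
        intro w
        rw [Finset.mul_sum]
        refine Finset.sum_congr rfl fun d _ => ?_
        have : (∏ i, chE q (w i * (d' i - d i)))
            = (∏ i, chE q (w i * d' i)) * (∏ i, chE q (w i * d i))⁻¹ := by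
          rw [← Finset.prod_inv_distrib, ← Finset.prod_mul_distrib]
          refine Finset.prod_congr rfl fun i _ => ?_
          rw [← chE_sub]
          congr 1
          ring
        rw [this]; ring
      calc ∑ w : Fin m → ZMod q, (∏ i, chE q (w i * d' i))
            * (∑ d : Fin m → ZMod q, Acorr q h f d * (∏ i, chE q (w i * d i))⁻¹)
          = ∑ w : Fin m → ZMod q, ∑ d : Fin m → ZMod q,
              Acorr q h f d * (∏ i, chE q (w i * (d' i - d i))) := by
            exact Finset.sum_congr rfl fun w _ => step w
        _ = ∑ d : Fin m → ZMod q, Acorr q h f d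
              * (∑ w : Fin m → ZMod q, ∏ i, chE q (w i * (d' i - d i))) := by
            rw [Finset.sum_comm]
            exact Finset.sum_congr rfl fun d _ => by rw [Finset.mul_sum]
        _ = ∑ d : Fin m → ZMod q, Acorr q h f d
              * (if d' - d = 0 then ((q : ℂ)) ^ m else 0) := by
            refine Finset.sum_congr rfl fun d _ => ?_
            congr 1
            have := ortho q m (d' - d)
            simpa using this
        _ = Acorr q h f d' * (q : ℂ) ^ m := by
            rw [Finset.sum_eq_single d']
            · simp
            · intro b _ hb
              rw [if_neg (fun hc => hb (sub_eq_zero.mp hc).symm)]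
              ring
            · intro hx
              exact absurd (Finset.mem_univ d') hx
    have calc2 : ∑ w : Fin m → ZMod q, (∏ i, chE q (w i * d' i))
          * (∑ d : Fin m → ZMod q, Acorr q h f d * (∏ i, chE q (w i * d i))⁻¹)
        = 0 := by
      calc ∑ w : Fin m → ZMod q, (∏ i, chE q (w i * d' i))
            * (∑ d : Fin m → ZMod q, Acorr q h f d * (∏ i, chE q (w i * d i))⁻¹)
          = ∑ w : Fin m → ZMod q, (∏ i, chE q (w i * d' i)) * ((q : ℂ) ^ m) := by
            exact Finset.sum_congr rfl fun w _ => by rw [H' w]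
        _ = (∑ w : Fin m → ZMod q, ∏ i, chE q (w i * d' i)) * ((q : ℂ) ^ m) := by
            rw [Finset.sum_mul]
        _ = 0 := by rw [ortho, if_neg hd', zero_mul]
    have : Acorr q h f d' * (q : ℂ) ^ m = 0 := by rw [← calc1, calc2]
    exact (mul_eq_zero.mp this).resolve_right hq0
  · intro hA w
    refine (habs _).mpr ?_
    rw [WS_expand]
    rw [Finset.sum_eq_single 0]
    · rw [Acorr_zero]
      have : (∏ i, chE q (w i * (0 : Fin m → ZMod q) i)) = 1 := by
        simp [chE_zero]
      rw [this, inv_one, mul_one]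
    · intro b _ hb
      rw [hA b hb, zero_mul]
    · intro hx
      exact absurd (Finset.mem_univ _) hx

/-- A Butson Hadamard matrix in `BH(n,k)`:  an `n × n` matrix with entries in
`⟨ζ_k⟩` such that `M M* = n Iₙ`. -/
def IsBH {ι : Type*} [Fintype ι] [DecidableEq ι] (n k : ℕ) (M : Matrix ι ι ℂ) : Prop :=
  Fintype.card ι = n ∧ (∀ a b, ∃ j : ℕ, M a b = zeta k ^ j) ∧
    M * M.conjTranspose = (n : ℂ) • (1 : Matrix ι ι ℂ)

lemma entry_eq (q h : ℕ) {m : ℕ} [NeZero q] [NeZero h]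
    (f : (Fin m → ZMod q) → ZMod h) (a b : Fin m → ZMod q) :
    ((Matrix.of fun a b : Fin m → ZMod q => zeta h ^ (f (a + b) - f a - f b).val) *
      (Matrix.of fun a b : Fin m → ZMod q =>
        zeta h ^ (f (a + b) - f a - f b).val).conjTranspose) a b
      = chE h (f b - f a) * Acorr q h f (a - b) := by
  rw [Matrix.mul_apply]
  simp only [Matrix.conjTranspose_apply, Matrix.of_apply]
  have step : ∀ c : Fin m → ZMod q,
      (zeta h ^ (f (a + c) - f a - f c).val)
        * (starRingEnd ℂ) (zeta h ^ (f (b + c) - f b - f c).val)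
      = chE h (f b - f a) * (chE h (f (a + c)) * (chE h (f (b + c)))⁻¹) := by
    intro c
    show chE h (f (a + c) - f a - f c) * (starRingEnd ℂ) (chE h (f (b + c) - f b - f c)) = _
    rw [conj_chE, chE_sub (h) (f (a+c) - f a), chE_sub h (f (a+c)) (f a),
      chE_sub h (f (b+c) - f b), chE_sub h (f (b+c)) (f b), chE_sub h (f b) (f a)]
    have h1 := chE_ne_zero h (f a)
    have h2 := chE_ne_zero h (f b)
    have h3 := chE_ne_zero h (f c)
    have h4 := chE_ne_zero h (f (a + c))
    have h5 := chE_ne_zero h (f (b + c))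
    field_simp
  calc (∑ c : Fin m → ZMod q, (zeta h ^ (f (a + c) - f a - f c).val)
        * (starRingEnd ℂ) (zeta h ^ (f (b + c) - f b - f c).val))
      = ∑ c : Fin m → ZMod q,
          chE h (f b - f a) * (chE h (f (a + c)) * (chE h (f (b + c)))⁻¹) := by
        exact Finset.sum_congr rfl fun c _ => step c
    _ = chE h (f b - f a) * ∑ c : Fin m → ZMod q,
          chE h (f (a + c)) * (chE h (f (b + c)))⁻¹ := by rw [Finset.mul_sum]
    _ = chE h (f b - f a) * Acorr q h f (a - b) := by
        congr 1
        rw [Acorr]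
        rw [← Equiv.sum_comp (Equiv.addLeft (-b))
          (fun c => chE h (f (a + c)) * (chE h (f (b + c)))⁻¹)]
        refine Finset.sum_congr rfl fun x _ => ?_
        simp only [Equiv.coe_addLeft]
        have e1 : a + (-b + x) = x + (a - b) := by ring
        have e2 : b + (-b + x) = x := by ring
        rw [e1, e2, chE_sub]

lemma bh_iff (q h : ℕ) {m : ℕ} [NeZero q] [NeZero h]
    (f : (Fin m → ZMod q) → ZMod h) :
    IsBH (q ^ m) h (Matrix.of fun a b : Fin m → ZMod q =>
        zeta h ^ (f (a + b) - f a - f b).val)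
      ↔ ∀ d : Fin m → ZMod q, d ≠ 0 → Acorr q h f d = 0 := by
  constructor
  · rintro ⟨-, -, hM⟩ d hd
    have hent := congrFun (congrFun hM d) 0
    rw [entry_eq] at hent
    have hrhs : (((q ^ m : ℕ) : ℂ) • (1 : Matrix (Fin m → ZMod q) (Fin m → ZMod q) ℂ)) d 0
        = 0 := by
      simp [Matrix.smul_apply, Matrix.one_apply, hd]
    rw [hrhs, sub_zero] at hent
    exact (mul_eq_zero.mp hent).resolve_left (chE_ne_zero h _)
  · intro hA
    refine ⟨card_fun q m, fun a b => ⟨(f (a + b) - f a - f b).val, rfl⟩, ?_⟩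
    ext a b
    rw [entry_eq]
    by_cases hab : a = b
    · subst hab
      rw [sub_self (f a), chE_zero, one_mul, sub_self, Acorr_zero]
      simp [Matrix.smul_apply, Matrix.one_apply]
    · rw [hA (a - b) (sub_ne_zero.mpr hab), mul_zero]
      simp [Matrix.smul_apply, Matrix.one_apply, hab]


/-- `f` (normalized, `f 0 = 0`) is a generalized bent function iff
the coboundary matrix `M_{∂f} = [ζ_h^{f(a+b)-f(a)-f(b)}]` is in `BH(q^m, h)`. -/
theorem isGBF_iff_coboundary_isBH
    (q m h : ℕ) [NeZero q] (hq : 2 ≤ q) (hh : 2 ≤ h) (hm : 1 ≤ m)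
    (f : (Fin m → ZMod q) → ZMod h) (hf0 : f 0 = 0) :
    IsGBF q h f ↔
      IsBH (q ^ m) h
        (Matrix.of fun a b : Fin m → ZMod q =>
          zeta h ^ (f (a + b) - f a - f b).val) := by
  haveI : NeZero h := ⟨by omega⟩
  rw [gbf_iff, bh_iff]

end
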